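/- Let S be a numerical semigroup that is not a half-line. Then C(S) = 2 if and only if for every minimal generator x of S, the set {x+1, x+2} intersects S. -/
import Mathlib


open Set

/-- A numerical semigroup: contains 0, closed under addition, finite complement. -/
def IsNumSgp (S : Set ℕ) : Prop :=
  0 ∈ S ∧ (∀ a ∈ S, ∀ b ∈ S, a + b ∈ S) ∧ (Sᶜ : Set ℕ).Finite

/-- The multiplicity: least positive element. -/
noncomputable def mult (S : Set ℕ) : ℕ := sInf {n | n ∈ S ∧ n ≠ 0}

/-- next_S(s) = min { x ∈ S | s < x }. -/
noncomputable def nextS (S : Set ℕ) (s : ℕ) : ℕ := sInf {x | x ∈ S ∧ s < x}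

/-- The concentration C(S) = max { next_S(s) - s | s ∈ S \ {0} }. -/
noncomputable def conc (S : Set ℕ) : ℕ :=
  sSup {d | ∃ s ∈ S, s ≠ 0 ∧ d = nextS S s - s}

/-- The Frobenius number: largest gap. -/
noncomputable def frob (S : Set ℕ) : ℕ := sSup (Sᶜ : Set ℕ)

/-- The genus: number of gaps. -/
noncomputable def genus (S : Set ℕ) : ℕ := (Sᶜ : Set ℕ).ncard

/-- x is a minimal generator of S. -/
def IsMinGen (S : Set ℕ) (x : ℕ) : Prop :=
  x ∈ S ∧ x ≠ 0 ∧ ¬∃ a ∈ S, ∃ b ∈ S, a ≠ 0 ∧ b ≠ 0 ∧ a + b = x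

/-- The embedding dimension: number of minimal generators. -/
noncomputable def edim (S : Set ℕ) : ℕ := {x | IsMinGen S x}.ncard

/-- n(S): the number of elements of S smaller than the Frobenius number. -/
noncomputable def nS (S : Set ℕ) : ℕ := {s | s ∈ S ∧ s < frob S}.ncard

/-- The half-line Δ(m) = {0} ∪ {m, m+1, ...}. -/
def Delta (m : ℕ) : Set ℕ := {0} ∪ {n | m ≤ n}

def IsHalfLine (S : Set ℕ) : Prop := ∃ m, S = Delta m

/-- An irreducible numerical semigroup. -/
def Irred (S : Set ℕ) : Prop :=
  ¬∃ T₁ T₂ : Set ℕ, IsNumSgp T₁ ∧ IsNumSgp T₂ ∧ S ⊂ T₁ ∧ S ⊂ T₂ ∧ S = T₁ ∩ T₂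

lemma aux_exists_pos (S : Set ℕ) (hS : IsNumSgp S) : ∃ n, n ∈ S ∧ n ≠ 0 := by
  have hinf : S.Infinite := by
    have := hS.2.2.infinite_compl
    simpa using this
  obtain ⟨n, hn, hn0⟩ := (hinf.diff (Set.finite_singleton 0)).nonempty
  exact ⟨n, hn, by simpa using hn0⟩

lemma aux_large_mem (S : Set ℕ) (hS : IsNumSgp S) {n : ℕ} (h : frob S < n) : n ∈ S := by
  by_contra hn
  rw [frob] at h
  exact absurd (le_csSup hS.2.2.bddAbove hn) (by omega)

lemma aux_nextS (S : Set ℕ) (hS : IsNumSgp S) (s : ℕ) :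
    nextS S s ∈ S ∧ s < nextS S s ∧ nextS S s ≤ max s (frob S) + 1 := by
  have hmem : max s (frob S) + 1 ∈ {x | x ∈ S ∧ s < x} := by
    refine ⟨aux_large_mem S hS (by omega), by omega⟩
  have h1 := Nat.sInf_mem (⟨_, hmem⟩ : {x | x ∈ S ∧ s < x}.Nonempty)
  exact ⟨h1.1, h1.2, Nat.sInf_le hmem⟩

lemma aux_bdd (S : Set ℕ) (hS : IsNumSgp S) :
    BddAbove {d | ∃ s ∈ S, s ≠ 0 ∧ d = nextS S s - s} := by
  refine ⟨frob S + 1, ?_⟩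
  rintro d ⟨s, hs, hs0, rfl⟩
  have := (aux_nextS S hS s).2.2
  have : nextS S s ≤ s + frob S + 1 := by omega
  omega

lemma aux_not_hl (S : Set ℕ) (hS : IsNumSgp S) (hnot : ¬IsHalfLine S) :
    ∃ s, s ∈ S ∧ s ≠ 0 ∧ s + 1 ∉ S := by
  by_contra h
  push_neg at h
  apply hnot
  have hne : {n | n ∈ S ∧ n ≠ 0}.Nonempty := by
    obtain ⟨n, hn⟩ := aux_exists_pos S hS; exact ⟨n, hn⟩
  set m := sInf {n | n ∈ S ∧ n ≠ 0} with hm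
  have hmm : m ∈ S ∧ m ≠ 0 := Nat.sInf_mem hne
  have hstep : ∀ k, m + k ∈ S := by
    intro k
    induction k with
    | zero => simpa using hmm.1
    | succ k ih => exact h (m + k) ih (by omega)
  refine ⟨m, ?_⟩
  ext n
  simp only [Delta, Set.mem_union, Set.mem_singleton_iff, Set.mem_setOf_eq]
  constructor
  · intro hn
    by_cases h0 : n = 0
    · exact Or.inl h0
    · exact Or.inr (Nat.sInf_le ⟨hn, h0⟩)
  · rintro (rfl | hge)
    · exact hS.1
    · have := hstep (n - m); rwa [Nat.add_sub_cancel' hge] at this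

theorem stmt2 (S : Set ℕ) (hS : IsNumSgp S) (hnot : ¬IsHalfLine S) :
    conc S = 2 ↔ ∀ x : ℕ, IsMinGen S x → (x + 1 ∈ S ∨ x + 2 ∈ S) := by

  constructor
  · intro hc x hx
    have hd : nextS S x - x ∈ {d | ∃ s ∈ S, s ≠ 0 ∧ d = nextS S s - s} :=
      ⟨x, hx.1, hx.2.1, rfl⟩
    have hle : nextS S x - x ≤ 2 := by
      have := le_csSup (aux_bdd S hS) hd
      rw [conc] at hc; omega
    obtain ⟨h1, h2, _⟩ := aux_nextS S hS x
    have : nextS S x = x + 1 ∨ nextS S x = x + 2 := by omega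
    rcases this with h | h
    · left; rwa [← h]
    · right; rwa [← h]
  · intro h
    have key : ∀ s, s ∈ S → s ≠ 0 → s + 1 ∈ S ∨ s + 2 ∈ S := by
      intro s
      induction s using Nat.strong_induction_on with
      | _ s ih =>
        intro hs hs0
        by_cases hmg : IsMinGen S s
        · exact h s hmg
        · have hex : ∃ a ∈ S, ∃ b ∈ S, a ≠ 0 ∧ b ≠ 0 ∧ a + b = s := by
            by_contra hc
            exact hmg ⟨hs, hs0, hc⟩
          obtain ⟨a, ha, b, hb, ha0, hb0, hab⟩ := hex
          rcases ih a (by omega) ha ha0 with h1 | h2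
          · left
            have := hS.2.1 _ h1 _ hb
            have heq : a + 1 + b = s + 1 := by omega
            rwa [heq] at this
          · right
            have := hS.2.1 _ h2 _ hb
            have heq : a + 2 + b = s + 2 := by omega
            rwa [heq] at this
    -- upper bound
    have hub : ∀ d ∈ {d | ∃ s ∈ S, s ≠ 0 ∧ d = nextS S s - s}, d ≤ 2 := by
      rintro d ⟨s, hs, hs0, rfl⟩
      have hle : nextS S s ≤ s + 2 := by
        rcases key s hs hs0 with h1 | h2
        · have : nextS S s ≤ s + 1 := Nat.sInf_le ⟨h1, by omega⟩
          omega
        · exact Nat.sInf_le ⟨h2, by omega⟩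
      omega
    -- lower bound
    obtain ⟨s, hs, hs0, hs1⟩ := aux_not_hl S hS hnot
    obtain ⟨hn1, hn2, _⟩ := aux_nextS S hS s
    have hge : 2 ≤ nextS S s - s := by
      by_contra hc
      have : nextS S s = s + 1 := by omega
      rw [this] at hn1
      exact hs1 hn1
    have hDne : 2 ≤ conc S := by
      have := le_csSup (aux_bdd S hS) (⟨s, hs, hs0, rfl⟩ :
        nextS S s - s ∈ {d | ∃ s ∈ S, s ≠ 0 ∧ d = nextS S s - s})
      rw [conc]; omega
    have hle2 : conc S ≤ 2 := by
      rw [conc]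
      exact csSup_le ⟨_, ⟨s, hs, hs0, rfl⟩⟩ hub
    omega
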